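/- arXiv:1910.14032 — 2 statements merged into one kernel-verified Lean document; each statement's English description precedes it below -/
import Mathlib

section
/- If an ensemble of pure states {ρ_j, p_j} forms a 2-design, i.e., Σ_j p_j ρ_j ⊗ ρ_j* = (d|Φ⟩⟨Φ| + 1)/(d(d+1)), then the preparation operator Θ_P = d Σ_j p_j ρ_j ⊗ ρ_j* equals (d|Φ⟩⟨Φ| + 1)/(d+1), and for this Θ_P the maximal passing probability satisfies p_E(Θ_P, ε) = 1 − dε/(d+1) for 0 ≤ ε ≤ 1 − 1/d². -/
open scoped Matrix Kronecker ComplexOrder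

/-- Partial trace over the first tensor factor. -/
noncomputable def ptrace1 {d : ℕ} (M : Matrix (Fin d × Fin d) (Fin d × Fin d) ℂ) :
    Matrix (Fin d) (Fin d) ℂ :=
  fun j l => ∑ a, M (a, j) (a, l)

/-- The maximally entangled vector `Φ = (1/√d) ∑ⱼ |jj⟩`. -/
noncomputable def maxEnt (d : ℕ) : Fin d × Fin d → ℂ :=
  fun p => if p.1 = p.2 then (1 / Real.sqrt d : ℝ) else 0

/-- The maximal passing probability
`p_E(Θ, ε) := max { tr(Θ χ) : χ ≥ 0, tr₁ χ = 1/d, ⟨Φ|χ|Φ⟩ ≤ 1 − ε }`,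
where `χ` ranges over Choi states. -/
noncomputable def pE (d : ℕ) (Θ : Matrix (Fin d × Fin d) (Fin d × Fin d) ℂ) (ε : ℝ) : ℝ :=
  sSup { x : ℝ | ∃ χ : Matrix (Fin d × Fin d) (Fin d × Fin d) ℂ,
    χ.PosSemidef ∧ ptrace1 χ = (1 / (d : ℂ)) • (1 : Matrix (Fin d) (Fin d) ℂ) ∧
    (star (maxEnt d) ⬝ᵥ χ.mulVec (maxEnt d)).re ≤ 1 - ε ∧ x = ((Θ * χ).trace).re }

/-- The rank-one projector `|ψ⟩⟨ψ|` of a vector `ψ`. -/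
noncomputable def proj {n : Type*} [Fintype n] (ψ : n → ℂ) : Matrix n n ℂ :=
  Matrix.vecMulVec ψ (star ψ)

/-! ### Auxiliary lemmas -/

lemma psd_real_smul {n : Type*} [Fintype n] {M : Matrix n n ℂ} (hM : M.PosSemidef)
    {c : ℝ} (hc : 0 ≤ c) : ((c : ℂ) • M).PosSemidef := by
  rw [Matrix.posSemidef_iff_dotProduct_mulVec]
  constructor
  · show _ = _
    rw [Matrix.conjTranspose_smul, hM.1]
    congr 1
    simp [Complex.star_def, Complex.conj_ofReal]
  · intro x
    rw [Matrix.smul_mulVec, dotProduct_smul, smul_eq_mul]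
    exact mul_nonneg (by positivity) (hM.dotProduct_mulVec_nonneg x)

lemma proj_mulVec {n : Type*} [Fintype n] (v x : n → ℂ) :
    proj v *ᵥ x = (star v ⬝ᵥ x) • v := by
  funext q
  simp only [proj, Matrix.mulVec, dotProduct, Matrix.vecMulVec_apply, Pi.star_apply,
    Pi.smul_apply, smul_eq_mul, Finset.sum_mul]
  exact Finset.sum_congr rfl fun p _ => by ring

lemma proj_psd {n : Type*} [Fintype n] (v : n → ℂ) : (proj v).PosSemidef := by
  rw [Matrix.posSemidef_iff_dotProduct_mulVec]
  constructor
  · show _ = _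
    ext p q
    simp [proj, Matrix.vecMulVec_apply, Matrix.conjTranspose_apply, mul_comm]
  · intro x
    rw [proj_mulVec, dotProduct_smul, smul_eq_mul]
    have h1 : star x ⬝ᵥ v = star (star v ⬝ᵥ x) := by
      simp only [dotProduct, Pi.star_apply, star_sum, star_mul', star_star]
      exact Finset.sum_congr rfl fun q _ => by ring
    rw [mul_comm, h1]
    exact star_mul_self_nonneg _

lemma trace_proj_mul {n : Type*} [Fintype n] (v : n → ℂ) (χ : Matrix n n ℂ) :
    (proj v * χ).trace = star v ⬝ᵥ χ *ᵥ v := by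
  simp only [Matrix.trace, Matrix.diag, Matrix.mul_apply, proj, Matrix.vecMulVec_apply,
    dotProduct, Matrix.mulVec, Pi.star_apply, Finset.mul_sum]
  rw [Finset.sum_comm]
  exact Finset.sum_congr rfl fun q _ => Finset.sum_congr rfl fun p _ => by ring

lemma trace_eq_ptrace1 {d : ℕ} (χ : Matrix (Fin d × Fin d) (Fin d × Fin d) ℂ) :
    χ.trace = (ptrace1 χ).trace := by
  simp only [Matrix.trace, Matrix.diag, ptrace1]
  rw [Fintype.sum_prod_type]
  exact Finset.sum_comm

lemma sqrt_cast_sq {d : ℕ} (hd : 0 < d) :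
    ((1 / Real.sqrt d : ℝ) : ℂ) * ((1 / Real.sqrt d : ℝ) : ℂ) = 1 / (d : ℂ) := by
  rw [← Complex.ofReal_mul, div_mul_div_comm, one_mul,
    Real.mul_self_sqrt (Nat.cast_nonneg d)]
  push_cast
  ring

lemma maxEnt_norm {d : ℕ} (hd : 0 < d) : star (maxEnt d) ⬝ᵥ maxEnt d = 1 := by
  have hd0 : (d : ℂ) ≠ 0 := Nat.cast_ne_zero.mpr hd.ne'
  simp only [dotProduct, Pi.star_apply, maxEnt]
  rw [Fintype.sum_prod_type]
  simp only [apply_ite (star : ℂ → ℂ), star_zero, ite_mul, mul_ite, mul_zero, zero_mul]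
  simp only [Finset.sum_ite_eq, Finset.mem_univ, if_true, Finset.sum_const,
    Finset.card_univ, Fintype.card_fin, nsmul_eq_mul]
  rw [show (star ((1 / Real.sqrt d : ℝ) : ℂ)) = ((1 / Real.sqrt d : ℝ) : ℂ) by
    simp [Complex.star_def, Complex.conj_ofReal]]
  rw [sqrt_cast_sq hd]
  field_simp

lemma proj_maxEnt_mulVec {d : ℕ} (hd : 0 < d) :
    proj (maxEnt d) *ᵥ maxEnt d = maxEnt d := by
  rw [proj_mulVec, maxEnt_norm hd, one_smul]

lemma ptrace1_add {d : ℕ} (A B : Matrix (Fin d × Fin d) (Fin d × Fin d) ℂ) :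
    ptrace1 (A + B) = ptrace1 A + ptrace1 B := by
  ext j l
  simp [ptrace1, Finset.sum_add_distrib]

lemma ptrace1_smul {d : ℕ} (c : ℂ) (A : Matrix (Fin d × Fin d) (Fin d × Fin d) ℂ) :
    ptrace1 (c • A) = c • ptrace1 A := by
  ext j l
  simp [ptrace1, Finset.mul_sum]

lemma ptrace1_one {d : ℕ} :
    ptrace1 (1 : Matrix (Fin d × Fin d) (Fin d × Fin d) ℂ) = (d : ℂ) • 1 := by
  ext j l
  simp only [ptrace1, Matrix.one_apply, Prod.mk.injEq, Matrix.smul_apply, smul_eq_mul]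
  by_cases h : j = l
  · subst h
    simp
  · simp [h]

lemma ptrace1_proj_maxEnt {d : ℕ} (hd : 0 < d) :
    ptrace1 (proj (maxEnt d)) = (1 / (d : ℂ)) • 1 := by
  ext j l
  simp only [ptrace1, proj, Matrix.vecMulVec_apply, maxEnt, Pi.star_apply,
    Matrix.smul_apply, Matrix.one_apply, smul_eq_mul]
  simp only [apply_ite (star : ℂ → ℂ), star_zero, ite_mul, mul_ite, mul_zero, zero_mul]
  rw [show (star ((1 / Real.sqrt d : ℝ) : ℂ)) = ((1 / Real.sqrt d : ℝ) : ℂ) by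
    simp [Complex.star_def, Complex.conj_ofReal]]
  by_cases h : j = l
  · subst h
    simp only [Finset.sum_ite_eq', Finset.mem_univ, if_true, if_pos rfl]
    rw [sqrt_cast_sq hd]
    simp
  · have h0 : ∀ a : Fin d, a ∈ Finset.univ → (if a = l then (if a = j then
        ((1 / Real.sqrt d : ℝ) : ℂ) * ((1 / Real.sqrt d : ℝ) : ℂ) else 0) else 0) = 0 := by
      intro a _
      by_cases ha : a = l
      · subst ha
        rw [if_pos rfl, if_neg (fun hh => h hh.symm)]
      · simp [ha]
    rw [Finset.sum_eq_zero h0, if_neg h]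

lemma trace_theta {d : ℕ} (χ : Matrix (Fin d × Fin d) (Fin d × Fin d) ℂ) :
    (((1 / ((d : ℂ) + 1)) • ((d : ℂ) • proj (maxEnt d) + 1) : Matrix _ _ ℂ) * χ).trace
      = (1 / ((d : ℂ) + 1)) * ((d : ℂ) * (star (maxEnt d) ⬝ᵥ χ *ᵥ maxEnt d) + χ.trace) := by
  rw [Matrix.smul_mul, Matrix.trace_smul, Matrix.add_mul, Matrix.smul_mul, Matrix.trace_add,
    Matrix.trace_smul, trace_proj_mul, Matrix.one_mul]
  simp [smul_eq_mul]

lemma exists_t {d : ℕ} (hd : 0 < d) {ε : ℝ} (hε0 : 0 ≤ ε) (hε1 : ε ≤ 1 - 1 / (d : ℝ) ^ 2) :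
    ∃ t : ℝ, 0 ≤ t ∧ t ≤ 1 ∧ t * (1 - 1 / (d : ℝ) ^ 2) = ε := by
  rcases Nat.lt_or_ge d 2 with h1 | h2
  · have hd1 : d = 1 := by omega
    subst hd1
    have : ε = 0 := by
      have : (1 : ℝ) - 1 / (1 : ℝ) ^ 2 = 0 := by norm_num
      push_cast at hε1
      nlinarith
    exact ⟨0, le_refl 0, zero_le_one, by simp [this]⟩
  · have hd2 : (2 : ℝ) ≤ (d : ℝ) := by exact_mod_cast h2
    have hpos : (0 : ℝ) < 1 - 1 / (d : ℝ) ^ 2 := by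
      have : (1 : ℝ) < (d : ℝ) ^ 2 := by nlinarith
      have hd0 : (0 : ℝ) < (d : ℝ) ^ 2 := by positivity
      rw [sub_pos, div_lt_one hd0]
      exact this
    refine ⟨ε / (1 - 1 / (d : ℝ) ^ 2), by positivity, ?_, div_mul_cancel₀ ε hpos.ne'⟩
    rw [div_le_one hpos]
    exact hε1

/-- if the ensemble of pure test states `{ρ_j, p_j}` is a 2-design, i.e.,
`∑ⱼ p_j ρ_j ⊗ ρ_j* = (d|Φ⟩⟨Φ| + 1)/(d(d+1))`, then the preparation operator
`Θ_P = d ∑ⱼ p_j ρ_j ⊗ ρ_j*` equals `(d|Φ⟩⟨Φ| + 1)/(d+1)`, and for this `Θ_P`,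
`p_E(Θ_P, ε) = 1 − dε/(d+1)` for all `0 ≤ ε ≤ 1 − 1/d²`. -/
theorem stmt_9 (d : ℕ) (hd : 0 < d) {ι : Type} [Fintype ι]
    (p : ι → ℝ) (hp : ∀ j, 0 ≤ p j) (hpsum : ∑ j, p j = 1)
    (ψ : ι → Fin d → ℂ) (hψ : ∀ j, star (ψ j) ⬝ᵥ ψ j = 1)
    (h2design : ∑ j, (p j : ℂ) • (proj (ψ j) ⊗ₖ (proj (ψ j)).map (starRingEnd ℂ)) =
      (1 / ((d : ℂ) * ((d : ℂ) + 1))) •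
        ((d : ℂ) • proj (maxEnt d) + (1 : Matrix (Fin d × Fin d) (Fin d × Fin d) ℂ)))
    (ΘP : Matrix (Fin d × Fin d) (Fin d × Fin d) ℂ)
    (hΘP : ΘP = (d : ℂ) • ∑ j, (p j : ℂ) •
      (proj (ψ j) ⊗ₖ (proj (ψ j)).map (starRingEnd ℂ))) :
    ΘP = (1 / ((d : ℂ) + 1)) •
        ((d : ℂ) • proj (maxEnt d) + (1 : Matrix (Fin d × Fin d) (Fin d × Fin d) ℂ)) ∧
      ∀ ε : ℝ, 0 ≤ ε → ε ≤ 1 - 1 / (d : ℝ) ^ 2 →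
        pE d ΘP ε = 1 - (d : ℝ) * ε / ((d : ℝ) + 1) := by
  have hd0 : (d : ℂ) ≠ 0 := Nat.cast_ne_zero.mpr hd.ne'
  have hd1 : ((d : ℂ) + 1) ≠ 0 := by
    have : ((d : ℂ) + 1) = ((d + 1 : ℕ) : ℂ) := by push_cast; ring
    rw [this]
    exact Nat.cast_ne_zero.mpr (Nat.succ_ne_zero d)
  have hdR : (0 : ℝ) < (d : ℝ) := Nat.cast_pos.mpr hd
  have hdR1 : (0 : ℝ) < (d : ℝ) + 1 := by linarith
  have hΘeq : ΘP = (1 / ((d : ℂ) + 1)) •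
      ((d : ℂ) • proj (maxEnt d) + (1 : Matrix (Fin d × Fin d) (Fin d × Fin d) ℂ)) := by
    rw [hΘP, h2design, smul_smul]
    congr 1
    field_simp
  refine ⟨hΘeq, ?_⟩
  intro ε hε0 hε1
  -- trace of χ is 1 when ptrace1 χ = (1/d) • 1
  have htr : ∀ χ : Matrix (Fin d × Fin d) (Fin d × Fin d) ℂ,
      ptrace1 χ = (1 / (d : ℂ)) • (1 : Matrix (Fin d) (Fin d) ℂ) → χ.trace = 1 := by
    intro χ hχ
    rw [trace_eq_ptrace1, hχ, Matrix.trace_smul, Matrix.trace_one]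
    simp only [Fintype.card_fin, smul_eq_mul]
    field_simp
  -- real-part formula
  have hre : ∀ χ : Matrix (Fin d × Fin d) (Fin d × Fin d) ℂ,
      ptrace1 χ = (1 / (d : ℂ)) • (1 : Matrix (Fin d) (Fin d) ℂ) →
      ((ΘP * χ).trace).re
        = (1 / ((d : ℝ) + 1)) * ((d : ℝ) * (star (maxEnt d) ⬝ᵥ χ *ᵥ maxEnt d).re + 1) := by
    intro χ hχ
    rw [hΘeq, trace_theta, htr χ hχ]
    have h1 : (1 / ((d : ℂ) + 1)) = ((1 / ((d : ℝ) + 1) : ℝ) : ℂ) := by push_cast; ring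
    have h2 : ((d : ℂ)) = (((d : ℝ) : ℂ)) := by push_cast; ring
    rw [h1, h2, Complex.re_ofReal_mul, Complex.add_re, Complex.re_ofReal_mul, Complex.one_re]
  -- the target value
  set v : ℝ := 1 - (d : ℝ) * ε / ((d : ℝ) + 1) with hv
  have hval : (1 / ((d : ℝ) + 1)) * ((d : ℝ) * (1 - ε) + 1) = v := by
    rw [hv]; field_simp; ring
  rw [pE]
  apply IsGreatest.csSup_eq
  constructor
  · -- membership: the optimal χ₀
    obtain ⟨t, ht0, ht1, htε⟩ := exists_t hd hε0 hε1
    have hd2R : (0 : ℝ) < (d : ℝ) ^ 2 := by positivity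
    set a : ℝ := 1 - t with ha
    set b : ℝ := t / (d : ℝ) ^ 2 with hb
    have ha0 : 0 ≤ a := by rw [ha]; linarith
    have hb0 : 0 ≤ b := by rw [hb]; positivity
    set χ₀ : Matrix (Fin d × Fin d) (Fin d × Fin d) ℂ :=
      (a : ℂ) • proj (maxEnt d) + (b : ℂ) • 1 with hχ₀
    have hab : a + b = 1 - ε := by
      rw [ha, hb, ← htε]
      field_simp
      ring
    have hptr : ptrace1 χ₀ = (1 / (d : ℂ)) • (1 : Matrix (Fin d) (Fin d) ℂ) := by
      rw [hχ₀, ptrace1_add, ptrace1_smul, ptrace1_smul, ptrace1_proj_maxEnt hd, ptrace1_one,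
        smul_smul, smul_smul, ← add_smul]
      congr 1
      have : (a : ℂ) * (1 / (d : ℂ)) + (b : ℂ) * (d : ℂ) = ((a / (d : ℝ) + b * (d : ℝ) : ℝ) : ℂ) := by
        push_cast; ring
      rw [this]
      have hreal : a / (d : ℝ) + b * (d : ℝ) = 1 / (d : ℝ) := by
        rw [ha, hb]
        field_simp
        ring
      rw [hreal]
      push_cast
      ring
    have hip : star (maxEnt d) ⬝ᵥ χ₀ *ᵥ maxEnt d = ((1 - ε : ℝ) : ℂ) := by
      rw [hχ₀, Matrix.add_mulVec, Matrix.smul_mulVec, Matrix.smul_mulVec,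
        Matrix.one_mulVec, proj_maxEnt_mulVec hd, dotProduct_add,
        dotProduct_smul, dotProduct_smul, maxEnt_norm hd]
      rw [← hab]
      push_cast
      simp
    have hpsd : χ₀.PosSemidef := by
      exact (psd_real_smul (proj_psd _) ha0).add (psd_real_smul Matrix.PosSemidef.one hb0)
    refine ⟨χ₀, hpsd, hptr, ?_, ?_⟩
    · rw [hip, Complex.ofReal_re]
    · rw [hre χ₀ hptr, hip, Complex.ofReal_re, hval]
  · -- upper bound
    rintro x ⟨χ, hpsd, hptr, hip, hx⟩
    rw [hx, hre χ hptr, ← hval]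
    have hd0R : (0 : ℝ) ≤ (d : ℝ) := le_of_lt hdR
    have h1 : (d : ℝ) * (star (maxEnt d) ⬝ᵥ χ *ᵥ maxEnt d).re ≤ (d : ℝ) * (1 - ε) :=
      mul_le_mul_of_nonneg_left hip hd0R
    have h2 : (0 : ℝ) ≤ 1 / ((d : ℝ) + 1) := by positivity
    nlinarith
end

section
/- For a balanced strategy, the spectral gap ν of Θ and the preparation and measurement spectral gaps satisfy ν ≥ ν_P ν_M, given that Θ ≤ ν_M Θ_P + β_M 1 where β_M = 1 − ν_M, and Θ_P − |Φ⟩⟨Φ| has norm β_P = 1 − ν_P. -/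
open scoped Matrix Kronecker ComplexOrder Matrix.Norms.L2Operator

namespace Stmt15Aux

open Matrix

variable {n : Type*} [Fintype n] [DecidableEq n]

omit [DecidableEq n] in
lemma proj_posSemidef (ψ : n → ℂ) : (proj ψ).PosSemidef := by
  rw [posSemidef_iff_dotProduct_mulVec]
  constructor
  · unfold proj Matrix.IsHermitian
    ext i j
    simp [conjTranspose_apply, vecMulVec_apply, mul_comm]
  · intro x
    unfold proj
    have key : (vecMulVec ψ (star ψ)) *ᵥ x = (star ψ ⬝ᵥ x) • ψ := by
      ext i
      simp only [mulVec, vecMulVec_apply, dotProduct, Pi.smul_apply, smul_eq_mul,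
        Finset.sum_mul, Finset.mul_sum]
      exact Finset.sum_congr rfl fun j _ => by simp; ring
    rw [key, dotProduct_smul]
    have hsx : star x ⬝ᵥ ψ = star (star ψ ⬝ᵥ x) := by
      simp [dotProduct, Complex.star_def, mul_comm]
    rw [smul_eq_mul, hsx]
    exact mul_star_self_nonneg _

omit [DecidableEq n] in
lemma psd_smul {A : Matrix n n ℂ} (hA : A.PosSemidef) {c : ℝ} (hc : 0 ≤ c) :
    ((c : ℂ) • A).PosSemidef := by
  rw [posSemidef_iff_dotProduct_mulVec]
  constructor
  · unfold Matrix.IsHermitian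
    rw [conjTranspose_smul, hA.1]; congr 1; simp
  · intro x
    rw [smul_mulVec, dotProduct_smul]
    exact smul_nonneg (by exact_mod_cast hc) (hA.dotProduct_mulVec_nonneg x)

omit [DecidableEq n] in
lemma herm_dot_real {A : Matrix n n ℂ} (hA : A.IsHermitian) (x : n → ℂ) :
    (star x ⬝ᵥ A *ᵥ x).im = 0 := by
  have h : star (star x ⬝ᵥ A *ᵥ x) = star x ⬝ᵥ A *ᵥ x := by
    conv_rhs => rw [← hA.eq]
    rw [star_dotProduct, star_star, star_mulVec, ← dotProduct_mulVec]
  have := congrArg Complex.im h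
  simp [Complex.star_def] at this
  linarith

omit [DecidableEq n] in
lemma inner_eq_dot (x y : n → ℂ) :
    (inner ℂ ((EuclideanSpace.equiv n ℂ).symm x) ((EuclideanSpace.equiv n ℂ).symm y) : ℂ)
      = star x ⬝ᵥ y := by
  simp [EuclideanSpace.inner_eq_star_dotProduct, dotProduct, mul_comm]

omit [DecidableEq n] in
lemma norm_sq_eq_dot (x : n → ℂ) :
    ‖(EuclideanSpace.equiv n ℂ).symm x‖ ^ 2 = (star x ⬝ᵥ x).re := by
  have := inner_eq_dot (n := n) x x
  rw [← this, ← @inner_self_eq_norm_sq ℂ]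
  rfl

lemma herm_le_norm_smul_one {X : Matrix n n ℂ} (hX : X.IsHermitian) :
    (((‖X‖ : ℂ)) • 1 - X).PosSemidef := by
  have hherm : (((‖X‖ : ℂ)) • 1 - X).IsHermitian := by
    unfold Matrix.IsHermitian
    rw [conjTranspose_sub, conjTranspose_smul, conjTranspose_one, hX.eq]
    congr 1
    simp [Complex.ext_iff]
  refine posSemidef_iff_dotProduct_mulVec.mpr ⟨hherm, fun x => ?_⟩
  rw [Complex.le_def]
  constructor
  · have hexp : star x ⬝ᵥ (((‖X‖ : ℂ)) • 1 - X) *ᵥ x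
        = (‖X‖ : ℂ) * (star x ⬝ᵥ x) - star x ⬝ᵥ X *ᵥ x := by
      rw [sub_mulVec, dotProduct_sub, smul_mulVec, one_mulVec, dotProduct_smul]
      simp [smul_eq_mul]
    set x' : EuclideanSpace ℂ n := (EuclideanSpace.equiv n ℂ).symm x with hx'
    have h1 : (star x ⬝ᵥ x).re = ‖x'‖ ^ 2 := by
      have := inner_eq_dot (n := n) x x
      rw [← this, ← hx']
      rw [← @inner_self_eq_norm_sq ℂ]
      rfl
    have h2 : (star x ⬝ᵥ X *ᵥ x).re ≤ ‖X‖ * ‖x'‖ ^ 2 := by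
      have hi := inner_eq_dot (n := n) x (X *ᵥ x)
      have hcs : ‖(inner ℂ x' ((EuclideanSpace.equiv n ℂ).symm (X *ᵥ x)) : ℂ)‖
          ≤ ‖x'‖ * (‖X‖ * ‖x'‖) := by
        refine le_trans (norm_inner_le_norm _ _) ?_
        gcongr
        exact X.l2_opNorm_mulVec x'
      calc (star x ⬝ᵥ X *ᵥ x).re ≤ |(star x ⬝ᵥ X *ᵥ x).re| := le_abs_self _
        _ ≤ ‖star x ⬝ᵥ X *ᵥ x‖ := Complex.abs_re_le_norm _
        _ = ‖star x ⬝ᵥ X *ᵥ x‖ := rfl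
        _ ≤ ‖x'‖ * (‖X‖ * ‖x'‖) := by rw [← hi] at *; exact hcs
        _ = ‖X‖ * ‖x'‖ ^ 2 := by ring
    have him : (star x ⬝ᵥ x).im = 0 := by
      have := herm_dot_real (isHermitian_one (n := n) (α := ℂ)) x
      rwa [one_mulVec] at this
    rw [hexp]
    simp only [Complex.sub_re, Complex.mul_re, Complex.ofReal_re, Complex.ofReal_im,
      Complex.zero_re, him, mul_zero, zero_mul, sub_zero]
    rw [h1]
    linarith
  · have h := herm_dot_real hherm x
    rw [Complex.zero_im]
    exact h.symm

open scoped MatrixOrder in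
lemma psd_norm_le {A : Matrix n n ℂ} (hA : A.PosSemidef) {c : ℝ} (hc : 0 ≤ c)
    (h : (((c : ℂ)) • 1 - A).PosSemidef) : ‖A‖ ≤ c := by
  obtain ⟨S, hS'⟩ := CStarAlgebra.nonneg_iff_eq_star_mul_self.mp hA.nonneg
  have hSS : Sᴴ * S = A := hS'.symm
  have hquad : ∀ y : n → ℂ, (star y ⬝ᵥ A *ᵥ y).re ≤ c * (star y ⬝ᵥ y).re := by
    intro y
    have h0 := h.dotProduct_mulVec_nonneg y
    rw [Complex.le_def] at h0
    have hre := h0.1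
    have hexp : star y ⬝ᵥ (((c : ℂ)) • 1 - A) *ᵥ y
        = (c : ℂ) * (star y ⬝ᵥ y) - star y ⬝ᵥ A *ᵥ y := by
      rw [sub_mulVec, dotProduct_sub, smul_mulVec, one_mulVec, dotProduct_smul]
      simp [smul_eq_mul]
    rw [hexp] at hre
    simp only [Complex.zero_re, Complex.sub_re, Complex.mul_re, Complex.ofReal_re,
      Complex.ofReal_im, zero_mul, sub_zero] at hre
    linarith
  have hSle : ‖S‖ ≤ Real.sqrt c := by
    rw [l2_opNorm_def]
    refine ContinuousLinearMap.opNorm_le_bound _ (Real.sqrt_nonneg c) fun x => ?_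
    obtain ⟨y, rfl⟩ : ∃ y : n → ℂ, (WithLp.equiv _ _).symm y = x :=
      ⟨WithLp.equiv _ _ x, rfl⟩
    have happ : (Matrix.toEuclideanLin.trans LinearMap.toContinuousLinearMap S)
        ((WithLp.equiv _ _).symm y) = (EuclideanSpace.equiv n ℂ).symm (S *ᵥ y) := by
      rfl
    rw [happ]
    have hsq : ‖(EuclideanSpace.equiv n ℂ).symm (S *ᵥ y)‖ ^ 2
        ≤ (Real.sqrt c * ‖((WithLp.equiv _ _).symm y : EuclideanSpace ℂ n)‖) ^ 2 := by
      rw [norm_sq_eq_dot]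
      have hdd : star (S *ᵥ y) ⬝ᵥ (S *ᵥ y) = star y ⬝ᵥ A *ᵥ y := by
        rw [star_mulVec, ← dotProduct_mulVec, mulVec_mulVec, hSS]
      rw [hdd, mul_pow, Real.sq_sqrt hc]
      have := hquad y
      have hny : (star y ⬝ᵥ y).re = ‖((WithLp.equiv _ _).symm y : EuclideanSpace ℂ n)‖ ^ 2 :=
        (norm_sq_eq_dot y).symm
      rw [hny] at this
      exact this
    have h2 := Real.sqrt_le_sqrt hsq
    rwa [Real.sqrt_sq (norm_nonneg _), Real.sqrt_sq (by positivity)] at h2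
  calc ‖A‖ = ‖Sᴴ * S‖ := by rw [hSS]
    _ = ‖S‖ * ‖S‖ := l2_opNorm_conjTranspose_mul_self _
    _ ≤ Real.sqrt c * Real.sqrt c :=
        mul_le_mul hSle hSle (norm_nonneg _) (Real.sqrt_nonneg _)
    _ = c := Real.mul_self_sqrt hc

end Stmt15Aux

set_option maxHeartbeats 1000000 in
/-- for a balanced strategy with `|Φ⟩⟨Φ| ≤ Θ_P ≤ Θ ≤ 1`, spectral gaps
`ν = 1 − ‖Θ − |Φ⟩⟨Φ|‖`, `ν_P = 1 − ‖Θ_P − |Φ⟩⟨Φ|‖`, and measurement gap `ν_M ∈ [0,1]`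
with `β_M = 1 − ν_M` such that `Θ ≤ ν_M Θ_P + β_M·1`, one has `ν ≥ ν_P ν_M`. -/
theorem stmt_15 (d : ℕ) (hd : 0 < d)
    (Θ ΘP : Matrix (Fin d × Fin d) (Fin d × Fin d) ℂ)
    (h1 : (ΘP - proj (maxEnt d)).PosSemidef)
    (h2 : (Θ - ΘP).PosSemidef)
    (h3 : ((1 : Matrix (Fin d × Fin d) (Fin d × Fin d) ℂ) - Θ).PosSemidef)
    (νM βM : ℝ) (hνM0 : 0 ≤ νM) (hνM1 : νM ≤ 1) (hβM : βM = 1 - νM)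
    (hup : (((νM : ℂ) • ΘP + (βM : ℂ) • (1 : Matrix (Fin d × Fin d) (Fin d × Fin d) ℂ))
      - Θ).PosSemidef)
    (ν νP : ℝ)
    (hν : ν = 1 - ‖Θ - proj (maxEnt d)‖)
    (hνP : νP = 1 - ‖ΘP - proj (maxEnt d)‖) :
    νP * νM ≤ ν := by
  set P : Matrix (Fin d × Fin d) (Fin d × Fin d) ℂ := proj (maxEnt d) with hP
  have hβM0 : 0 ≤ βM := by rw [hβM]; linarith
  -- Θ - P is PSD
  have hΘP : (Θ - P).PosSemidef := by
    have h := h2.add h1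
    rwa [sub_add_sub_cancel] at h
  -- 1 - P is PSD
  have h1P : ((1 : Matrix (Fin d × Fin d) (Fin d × Fin d) ℂ) - P).PosSemidef := by
    have h := h3.add hΘP
    rwa [sub_add_sub_cancel] at h
  -- ‖1 - P‖ ≤ 1
  have hn1 : ‖(1 : Matrix (Fin d × Fin d) (Fin d × Fin d) ℂ) - P‖ ≤ 1 := by
    refine Stmt15Aux.psd_norm_le h1P zero_le_one ?_
    have : ((1 : ℝ) : ℂ) • (1 : Matrix (Fin d × Fin d) (Fin d × Fin d) ℂ)
        - ((1 : Matrix (Fin d × Fin d) (Fin d × Fin d) ℂ) - P) = P := by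
      simp
    rw [this]
    exact Stmt15Aux.proj_posSemidef _
  set nP : ℝ := ‖ΘP - P‖ with hnP
  set n1 : ℝ := ‖(1 : Matrix (Fin d × Fin d) (Fin d × Fin d) ℂ) - P‖ with hn1d
  have hnP0 : 0 ≤ nP := norm_nonneg _
  have hn10 : 0 ≤ n1 := norm_nonneg _
  set c : ℝ := νM * nP + βM * n1 with hc
  have hc0 : 0 ≤ c := add_nonneg (mul_nonneg hνM0 hnP0) (mul_nonneg hβM0 hn10)
  -- the key upper bound c•1 - (Θ - P) is PSD
  have hkey : (((c : ℂ)) • 1 - (Θ - P)).PosSemidef := by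
    have M1 : ((νM : ℂ) • (((nP : ℂ)) • 1 - (ΘP - P))).PosSemidef :=
      Stmt15Aux.psd_smul (Stmt15Aux.herm_le_norm_smul_one h1.1) hνM0
    have M2 : ((βM : ℂ) • (((n1 : ℂ)) • 1
        - ((1 : Matrix (Fin d × Fin d) (Fin d × Fin d) ℂ) - P))).PosSemidef :=
      Stmt15Aux.psd_smul (Stmt15Aux.herm_le_norm_smul_one h1P.1) hβM0
    have hsum := (M1.add M2).add hup
    have heq : (νM : ℂ) • (((nP : ℂ)) • 1 - (ΘP - P))
        + (βM : ℂ) • (((n1 : ℂ)) • 1 - ((1 : Matrix (Fin d × Fin d) (Fin d × Fin d) ℂ) - P))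
        + (((νM : ℂ) • ΘP + (βM : ℂ) • (1 : Matrix (Fin d × Fin d) (Fin d × Fin d) ℂ)) - Θ)
        = ((c : ℂ)) • 1 - (Θ - P) := by
      rw [hc, hβM]
      push_cast
      module
    rwa [heq] at hsum
  have hbound : ‖Θ - P‖ ≤ c := Stmt15Aux.psd_norm_le hΘP hc0 hkey
  rw [hν, hνP]
  rw [hν] at *
  have : nP = ‖ΘP - P‖ := hnP
  nlinarith [hbound, mul_le_mul_of_nonneg_left hn1 hβM0]
end
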